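/- arXiv:1708.02075 — 6 statements merged into one kernel-verified Lean document; each statement's English description precedes it below -/
import Mathlib

section
/- The max-plus matrix equation A ⊗ X ⊗ B = C (A m×m, B n×n, C m×n) is solvable if and only if X* = A♯ ⊗' C ⊗' B♯ satisfies A ⊗ X* ⊗ B = C; moreover, X* is then the maximum solution. -/
/-- Min-plus addition on `EReal`: agrees with `+` on finite values, with `⊤` absorbing. -/
noncomputable def mpAdd (a b : EReal) : EReal := -((-a) + (-b))

/-- Max-plus matrix multiplication. -/
noncomputable def maxMul {α β γ : Type*} [Fintype β]
    (A : Matrix α β EReal) (B : Matrix β γ EReal) : Matrix α γ EReal :=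
  fun i j => ⨆ k, A i k + B k j

/-- Min-plus matrix multiplication. -/
noncomputable def minMul {α β γ : Type*} [Fintype β]
    (A : Matrix α β EReal) (B : Matrix β γ EReal) : Matrix α γ EReal :=
  fun i j => ⨅ k, mpAdd (A i k) (B k j)

/-- Max-plus matrix-vector multiplication. -/
noncomputable def maxMulVec {α β : Type*} [Fintype β]
    (A : Matrix α β EReal) (x : β → EReal) : α → EReal :=
  fun i => ⨆ j, A i j + x j

/-- Min-plus matrix-vector multiplication. -/
noncomputable def minMulVec {α β : Type*} [Fintype β]
    (A : Matrix α β EReal) (x : β → EReal) : α → EReal :=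
  fun i => ⨅ j, mpAdd (A i j) (x j)

/-- Conjugate `A♯ = -Aᵀ` (sending `-∞` to `+∞` and vice versa). -/
noncomputable def conj {α β : Type*} (A : Matrix α β EReal) : Matrix β α EReal :=
  fun j i => -(A i j)

/-- Max-plus Kronecker product: block `(i,k),(j,l)` entry is `A i j + B k l`. -/
noncomputable def kron {α β γ δ : Type*} (A : Matrix α β EReal) (B : Matrix γ δ EReal) :
    Matrix (α × γ) (β × δ) EReal :=
  fun ik jl => A ik.1 jl.1 + B ik.2 jl.2

/-- Min-plus Kronecker product. -/
noncomputable def minKron {α β γ δ : Type*} (A : Matrix α β EReal) (B : Matrix γ δ EReal) :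
    Matrix (α × γ) (β × δ) EReal :=
  fun ik jl => mpAdd (A ik.1 jl.1) (B ik.2 jl.2)

/-- Column-stacking vectorization: `vec X (j, i) = X i j`. -/
def vec {α β : Type*} (X : Matrix α β EReal) : β × α → EReal := fun p => X p.2 p.1

/-- Entries lie in `ℝ ∪ {-∞}`, i.e. no `+∞` entries. -/
def RMaxEntries {α β : Type*} (A : Matrix α β EReal) : Prop := ∀ i j, A i j ≠ ⊤

/-- Doubly ℝ-astic: entries in `ℝ ∪ {-∞}`, with a finite entry in each row and column. -/
def DoublyRAstic {α β : Type*} (A : Matrix α β EReal) : Prop :=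
  (∀ i j, A i j ≠ ⊤) ∧ (∀ i, ∃ j, A i j ≠ ⊥) ∧ (∀ j, ∃ i, A i j ≠ ⊥)

/-- All entries of the matrix are finite reals. -/
def FiniteEntries {α β : Type*} (C : Matrix α β EReal) : Prop :=
  ∀ i j, ∃ r : ℝ, C i j = (r : EReal)

/-- All entries of the vector are finite reals. -/
def FiniteVec {α : Type*} (b : α → EReal) : Prop := ∀ i, ∃ r : ℝ, b i = (r : EReal)

lemma adj (a x c : EReal) : a + x ≤ c ↔ x ≤ -(a + -c) := by
  induction a using EReal.rec <;> induction x using EReal.rec <;> induction c using EReal.rec <;>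
    simp_all [← EReal.coe_neg, ← EReal.coe_add, EReal.coe_le_coe_iff]
  all_goals constructor <;> intro <;> linarith

section main
variable {m n : ℕ} (A : Matrix (Fin m) (Fin m) EReal) (B : Matrix (Fin n) (Fin n) EReal)
    (C : Matrix (Fin m) (Fin n) EReal)

lemma h2aux (i : Fin m) (l j : Fin n) :
    minMul C (conj B) i l ≤ -(B l j + -(C i j)) := by
  have := iInf_le (fun j' => mpAdd (C i j') (conj B j' l)) j
  have e : mpAdd (C i j) (conj B j l) = -(B l j + -(C i j)) := by
    simp [mpAdd, conj, neg_neg, add_comm]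
  rwa [e] at this

lemma maxsol (X : Matrix (Fin m) (Fin n) EReal) (h : maxMul A (maxMul X B) = C)
    (k : Fin m) (l : Fin n) : X k l ≤ minMul (conj A) (minMul C (conj B)) k l := by
  refine le_iInf fun i => ?_
  have e : mpAdd (conj A k i) (minMul C (conj B) i l)
      = -(A i k + -(minMul C (conj B) i l)) := by simp [mpAdd, conj, neg_neg]
  rw [e, ← adj]
  refine le_iInf fun j => ?_
  have e2 : mpAdd (C i j) (conj B j l) = -(B l j + -(C i j)) := by
    simp [mpAdd, conj, neg_neg, add_comm]
  rw [e2, ← adj]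
  have h1 : B l j + (A i k + X k l) = A i k + (X k l + B l j) := by abel
  rw [h1]
  calc A i k + (X k l + B l j) ≤ A i k + maxMul X B k j :=
        add_le_add_right (le_iSup (fun l' => X k l' + B l' j) l) _
    _ ≤ maxMul A (maxMul X B) i j := le_iSup (fun k' => A i k' + maxMul X B k' j) k
    _ = C i j := by rw [h]

lemma subsol (i : Fin m) (j : Fin n) :
    maxMul A (maxMul (minMul (conj A) (minMul C (conj B))) B) i j ≤ C i j := by
  set Y := minMul (conj A) (minMul C (conj B)) with hY
  refine iSup_le fun k => ?_
  rw [adj]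
  refine iSup_le fun l => ?_
  rw [← adj]
  have h1 : Y k l ≤ -(A i k + -(minMul C (conj B) i l)) := by
    have := iInf_le (fun i' => mpAdd (conj A k i') (minMul C (conj B) i' l)) i
    have e : mpAdd (conj A k i) (minMul C (conj B) i l)
        = -(A i k + -(minMul C (conj B) i l)) := by simp [mpAdd, conj, neg_neg]
    rwa [e] at this
  have h3 : A i k + Y k l ≤ -(B l j + -(C i j)) :=
    le_trans ((adj _ _ _).mpr h1) (h2aux B C i l j)
  have h4 : B l j + (A i k + Y k l) ≤ C i j := (adj _ _ _).mpr h3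
  have h5 : A i k + (Y k l + B l j) = B l j + (A i k + Y k l) := by abel
  rw [h5]; exact h4

lemma rmaxY (hA : DoublyRAstic A) (hB : DoublyRAstic B) (hC : FiniteEntries C) :
    RMaxEntries (minMul (conj A) (minMul C (conj B))) := by
  intro k l
  obtain ⟨i, hi⟩ := hA.2.2 k
  obtain ⟨j, hj⟩ := hB.2.1 l
  obtain ⟨r, hr⟩ := hC i j
  have hBt := hB.1 l j
  have hsum : B l j + -(C i j) ≠ ⊥ := by
    rw [hr, ← EReal.coe_neg]
    simp [EReal.add_eq_bot_iff, hj]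
  have hT : minMul C (conj B) i l ≠ ⊤ := by
    have := h2aux B C i l j
    intro h
    rw [h, top_le_iff, EReal.neg_eq_top_iff] at this
    exact hsum this
  have key : minMul (conj A) (minMul C (conj B)) k l
      ≤ -(A i k + -(minMul C (conj B) i l)) := by
    have := iInf_le (fun i' => mpAdd (conj A k i') (minMul C (conj B) i' l)) i
    have e : mpAdd (conj A k i) (minMul C (conj B) i l)
        = -(A i k + -(minMul C (conj B) i l)) := by simp [mpAdd, conj, neg_neg]
    rwa [e] at this
  intro h
  rw [h, top_le_iff, EReal.neg_eq_top_iff, EReal.add_eq_bot_iff] at key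
  rcases key with h' | h'
  · exact hi h'
  · rw [EReal.neg_eq_bot_iff] at h'
    exact hT h'

end main

theorem stmt6 {m n : ℕ} (A : Matrix (Fin m) (Fin m) EReal) (B : Matrix (Fin n) (Fin n) EReal)
    (C : Matrix (Fin m) (Fin n) EReal)
    (hA : DoublyRAstic A) (hB : DoublyRAstic B) (hC : FiniteEntries C) :
    ((∃ X : Matrix (Fin m) (Fin n) EReal, RMaxEntries X ∧ maxMul A (maxMul X B) = C) ↔
      maxMul A (maxMul (minMul (conj A) (minMul C (conj B))) B) = C) ∧
    (∀ X : Matrix (Fin m) (Fin n) EReal, RMaxEntries X → maxMul A (maxMul X B) = C →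
      ∀ i j, X i j ≤ minMul (conj A) (minMul C (conj B)) i j) := by
  constructor
  · constructor
    · rintro ⟨X, _, hEq⟩
      funext i j
      refine le_antisymm (subsol A B C i j) ?_
      have hX := maxsol A B C X hEq
      calc C i j = maxMul A (maxMul X B) i j := (congrFun (congrFun hEq i) j).symm
        _ ≤ _ := by
          refine iSup_le fun k => le_trans ?_ (le_iSup _ k)
          refine add_le_add_right (iSup_le fun l => le_trans ?_ (le_iSup _ l)) _
          exact add_le_add_left (hX k l) _
    · intro hEq
      exact ⟨_, rmaxY A B C hA hB hC, hEq⟩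
  · intro X _ hEq i j
    exact maxsol A B C X hEq i j
end

section
/- For max-plus matrices, A ⊗ X ⊗ B ≤ C if and only if X ≤ A♯ ⊗' C ⊗' B♯ (entrywise order), where ♯ is the conjugate and ⊗' is min-plus matrix multiplication. -/
lemma my_neg_iInf {ι : Type*} (g : ι → EReal) : -(⨅ j, g j) = ⨆ j, -(g j) := by
  apply le_antisymm
  · rw [EReal.neg_le]
    refine le_iInf fun j => ?_
    rw [EReal.neg_le]
    exact le_iSup (fun j => -(g j)) j
  · refine iSup_le fun j => ?_
    rw [EReal.neg_le, neg_neg]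
    exact iInf_le g j

lemma my_add_iSup_le_iff {ι : Type*} {a c : EReal} (ha : a ≠ ⊤) (f : ι → EReal) :
    a + (⨆ l, f l) ≤ c ↔ ∀ l, a + f l ≤ c := by
  constructor
  · intro h l; exact le_trans (add_le_add_right (le_iSup f l) a) h
  · intro h
    induction a with
    | bot => simp
    | coe r =>
      have h1 : (⨆ l, f l) ≤ c - (r : EReal) := iSup_le fun l =>
        (EReal.le_sub_iff_add_le (Or.inl (by simp)) (Or.inl (by simp))).2
          (by rw [add_comm]; exact h l)
      have h2 := EReal.add_le_of_le_sub h1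
      rwa [add_comm]
    | top => exact absurd rfl ha

lemma my_le_mpAdd_iInf_iff {ι : Type*} {a x : EReal} (ha : a ≠ ⊥) (g : ι → EReal) :
    x ≤ mpAdd a (⨅ j, g j) ↔ ∀ j, x ≤ mpAdd a (g j) := by
  have key : ∀ t : EReal, x ≤ mpAdd a t ↔ (-a) + (-t) ≤ -x := by
    intro t
    unfold mpAdd
    constructor
    · intro h; rw [← neg_neg ((-a) + (-t)), EReal.neg_le, neg_neg]; exact h
    · intro h; exact EReal.le_neg_of_le_neg h
  rw [key, my_neg_iInf, my_add_iSup_le_iff (by simpa using ha)]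
  exact forall_congr' fun j => (key (g j)).symm

lemma my_pointwise {a b x : EReal} (r : ℝ) (ha : a ≠ ⊤) (hb : b ≠ ⊤) (hx : x ≠ ⊤) :
    a + (x + b) ≤ (r : EReal) ↔ x ≤ mpAdd (-a) (mpAdd (r : EReal) (-b)) := by
  have hrw : mpAdd (-a) (mpAdd (r : EReal) (-b)) = -(a + ((-(r : EReal)) + b)) := by
    unfold mpAdd; rw [neg_neg, neg_neg, neg_neg]
  rw [hrw]
  induction a with
  | bot => simp
  | top => exact absurd rfl ha
  | coe p =>
    induction b with
    | bot => simp [EReal.add_bot]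
    | top => exact absurd rfl hb
    | coe q =>
      induction x with
      | bot => simp [EReal.add_bot, EReal.bot_add]
      | top => exact absurd rfl hx
      | coe s =>
        rw [show ((p : EReal) + ((s : EReal) + (q : EReal))) = ((p + (s + q) : ℝ) : EReal) by
              push_cast; ring_nf,
            show (-((p : EReal) + ((-(r : EReal)) + (q : EReal)))) = ((-(p + (-r + q)) : ℝ) : EReal) by
              push_cast; ring_nf]
        rw [EReal.coe_le_coe_iff, EReal.coe_le_coe_iff]
        constructor <;> intro h <;> linarith

theorem stmt7 {m n : ℕ} (A : Matrix (Fin m) (Fin m) EReal) (B : Matrix (Fin n) (Fin n) EReal)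
    (C X : Matrix (Fin m) (Fin n) EReal)
    (hA : DoublyRAstic A) (hB : DoublyRAstic B) (hC : FiniteEntries C) (hX : RMaxEntries X) :
    (∀ i j, maxMul A (maxMul X B) i j ≤ C i j) ↔
      (∀ i j, X i j ≤ minMul (conj A) (minMul C (conj B)) i j) := by
  have key : ∀ i j k l, (A i k + (X k l + B l j) ≤ C i j ↔
      X k l ≤ mpAdd (-(A i k)) (mpAdd (C i j) (-(B l j)))) := by
    intro i j k l
    obtain ⟨r, hr⟩ := hC i j
    rw [hr]
    exact my_pointwise r (hA.1 i k) (hB.1 l j) (hX k l)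
  have LHS_iff : ∀ i j, (maxMul A (maxMul X B) i j ≤ C i j) ↔
      ∀ k l, A i k + (X k l + B l j) ≤ C i j := by
    intro i j
    unfold maxMul
    rw [iSup_le_iff]
    exact forall_congr' fun k => my_add_iSup_le_iff (hA.1 i k) _
  have RHS_iff : ∀ k l, (X k l ≤ minMul (conj A) (minMul C (conj B)) k l) ↔
      ∀ i j, X k l ≤ mpAdd (-(A i k)) (mpAdd (C i j) (-(B l j))) := by
    intro k l
    unfold minMul conj
    rw [le_iInf_iff]
    exact forall_congr' fun i => my_le_mpAdd_iInf_iff (by simp [hA.1 i k]) _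
  simp only [LHS_iff, RHS_iff]
  constructor
  · intro h k l i j
    exact (key i j k l).1 (h i j k l)
  · intro h i j k l
    exact (key i j k l).2 (h k l i j)
end

section
/- The basic max-plus Sylvester equation A₁ ⊗ X ⊗ B₁ ⊕ A₂ ⊗ X ⊗ B₂ = C is solvable if and only if X* = (A₁♯ ⊗' C ⊗' B₁♯) ⊕' (A₂♯ ⊗' C ⊗' B₂♯) is a solution; moreover X* is then the maximum solution. -/
theorem mp_adj (a x c : EReal) : a + x ≤ c ↔ x ≤ mpAdd (-a) c := by
  unfold mpAdd
  rw [neg_neg]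
  induction a using EReal.rec <;> induction x using EReal.rec <;> induction c using EReal.rec <;>
    simp_all [← EReal.coe_add, ← EReal.coe_neg, EReal.coe_le_coe_iff] <;>
    constructor <;> intro <;> linarith

theorem mp_adj' (a x c : EReal) : x + a ≤ c ↔ x ≤ mpAdd c (-a) := by
  rw [add_comm, mp_adj]
  unfold mpAdd
  rw [add_comm]

theorem mp_adj2 (a x c : EReal) : x ≤ mpAdd a c ↔ (-a) + x ≤ c := by
  rw [mp_adj, neg_neg]

theorem mpAdd_ne_top {a b : EReal} (ha : a ≠ ⊤) (hb : b ≠ ⊤) : mpAdd a b ≠ ⊤ := by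
  unfold mpAdd
  simp only [ne_eq, EReal.neg_eq_top_iff]
  intro h
  rcases EReal.add_eq_bot_iff.1 h with h' | h' <;> simp_all [EReal.neg_eq_bot_iff]

theorem sandwich_le_iff {m n : ℕ} (A : Matrix (Fin m) (Fin m) EReal)
    (B : Matrix (Fin n) (Fin n) EReal) (X C : Matrix (Fin m) (Fin n) EReal) :
    (∀ i j, maxMul A (maxMul X B) i j ≤ C i j) ↔
    (∀ k l, X k l ≤ minMul (conj A) (minMul C (conj B)) k l) := by
  have h1 : ∀ i j, (maxMul A (maxMul X B) i j ≤ C i j ↔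
      ∀ k l, A i k + (X k l + B l j) ≤ C i j) := by
    intro i j
    simp only [maxMul, iSup_le_iff]
    refine forall_congr' fun k => ?_
    rw [mp_adj]
    simp only [iSup_le_iff]
    exact forall_congr' fun l => (mp_adj _ _ _).symm
  have h2 : ∀ k l, (X k l ≤ minMul (conj A) (minMul C (conj B)) k l ↔
      ∀ i j, (A i k + (X k l + B l j)) ≤ C i j) := by
    intro k l
    simp only [minMul, conj, le_iInf_iff]
    refine forall_congr' fun i => ?_
    rw [mp_adj2]
    simp only [neg_neg, le_iInf_iff]
    refine forall_congr' fun j => ?_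
    rw [← mp_adj', add_assoc]
  simp only [h1, h2]
  exact ⟨fun h k l i j => h i j k l, fun h i j k l => h k l i j⟩

theorem ne_top_of_le' {a b : EReal} (h : a ≤ b) (hb : b ≠ ⊤) : a ≠ ⊤ :=
  fun h' => hb (top_le_iff.1 (h' ▸ h))

theorem stmt10 {m n : ℕ} (A₁ A₂ : Matrix (Fin m) (Fin m) EReal)
    (B₁ B₂ : Matrix (Fin n) (Fin n) EReal) (C : Matrix (Fin m) (Fin n) EReal)
    (hA₁ : DoublyRAstic A₁) (hA₂ : DoublyRAstic A₂)
    (hB₁ : DoublyRAstic B₁) (hB₂ : DoublyRAstic B₂) (hC : FiniteEntries C) :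
    ((∃ X : Matrix (Fin m) (Fin n) EReal, RMaxEntries X ∧
        (fun i j => maxMul A₁ (maxMul X B₁) i j ⊔ maxMul A₂ (maxMul X B₂) i j) = C) ↔
      (fun i j =>
          maxMul A₁ (maxMul (fun i' j' =>
            minMul (conj A₁) (minMul C (conj B₁)) i' j' ⊓
            minMul (conj A₂) (minMul C (conj B₂)) i' j') B₁) i j ⊔
          maxMul A₂ (maxMul (fun i' j' =>
            minMul (conj A₁) (minMul C (conj B₁)) i' j' ⊓
            minMul (conj A₂) (minMul C (conj B₂)) i' j') B₂) i j) = C) ∧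
    (∀ X : Matrix (Fin m) (Fin n) EReal, RMaxEntries X →
      (fun i j => maxMul A₁ (maxMul X B₁) i j ⊔ maxMul A₂ (maxMul X B₂) i j) = C →
      ∀ i j, X i j ≤ minMul (conj A₁) (minMul C (conj B₁)) i j ⊓
        minMul (conj A₂) (minMul C (conj B₂)) i j) := by
  have key : ∀ X : Matrix (Fin m) (Fin n) EReal,
      (∀ i j, maxMul A₁ (maxMul X B₁) i j ⊔ maxMul A₂ (maxMul X B₂) i j ≤ C i j) ↔
      (∀ k l, X k l ≤ minMul (conj A₁) (minMul C (conj B₁)) k l ⊓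
        minMul (conj A₂) (minMul C (conj B₂)) k l) := by
    intro X
    constructor
    · intro h k l
      exact le_inf
        ((sandwich_le_iff A₁ B₁ X C).1 (fun i j => le_trans le_sup_left (h i j)) k l)
        ((sandwich_le_iff A₂ B₂ X C).1 (fun i j => le_trans le_sup_right (h i j)) k l)
    · intro h i j
      exact sup_le
        ((sandwich_le_iff A₁ B₁ X C).2 (fun k l => le_trans (h k l) inf_le_left) i j)
        ((sandwich_le_iff A₂ B₂ X C).2 (fun k l => le_trans (h k l) inf_le_right) i j)
  have mono : ∀ (X Y : Matrix (Fin m) (Fin n) EReal), (∀ k l, X k l ≤ Y k l) →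
      ∀ (A : Matrix (Fin m) (Fin m) EReal) (B : Matrix (Fin n) (Fin n) EReal) i j,
      maxMul A (maxMul X B) i j ≤ maxMul A (maxMul Y B) i j := by
    intro X Y h A B i j
    exact iSup_mono fun k => add_le_add le_rfl (iSup_mono fun l => add_le_add (h k l) le_rfl)
  set Xs : Matrix (Fin m) (Fin n) EReal := fun i' j' =>
    minMul (conj A₁) (minMul C (conj B₁)) i' j' ⊓
    minMul (conj A₂) (minMul C (conj B₂)) i' j' with hXs
  have rmax : RMaxEntries Xs := by
    intro k l
    obtain ⟨i0, hi0⟩ := hA₁.2.2 k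
    obtain ⟨j0, hj0⟩ := hB₁.2.1 l
    obtain ⟨r, hr⟩ := hC i0 j0
    have hCne : C i0 j0 ≠ ⊤ := by simp [hr]
    have hBne : conj B₁ j0 l ≠ ⊤ := by
      simp [conj, EReal.neg_eq_top_iff, hj0]
    have hinner : minMul C (conj B₁) i0 l ≠ ⊤ :=
      ne_top_of_le' (iInf_le _ j0) (mpAdd_ne_top hCne hBne)
    have hAne : conj A₁ k i0 ≠ ⊤ := by
      simp [conj, EReal.neg_eq_top_iff, hi0]
    have h1 : minMul (conj A₁) (minMul C (conj B₁)) k l ≠ ⊤ :=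
      ne_top_of_le' (iInf_le _ i0) (mpAdd_ne_top hAne hinner)
    exact ne_top_of_le' inf_le_left h1
  refine ⟨⟨?_, ?_⟩, ?_⟩
  · rintro ⟨X, hX, hFX⟩
    have hle : ∀ i j, maxMul A₁ (maxMul X B₁) i j ⊔ maxMul A₂ (maxMul X B₂) i j ≤ C i j :=
      fun i j => le_of_eq (congrFun (congrFun hFX i) j)
    have hXle : ∀ k l, X k l ≤ Xs k l := (key X).1 hle
    have h1 : ∀ i j, maxMul A₁ (maxMul Xs B₁) i j ⊔ maxMul A₂ (maxMul Xs B₂) i j ≤ C i j :=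
      (key Xs).2 fun k l => le_rfl
    funext i j
    refine le_antisymm (h1 i j) ?_
    calc C i j = maxMul A₁ (maxMul X B₁) i j ⊔ maxMul A₂ (maxMul X B₂) i j :=
          (congrFun (congrFun hFX i) j).symm
      _ ≤ maxMul A₁ (maxMul Xs B₁) i j ⊔ maxMul A₂ (maxMul Xs B₂) i j :=
          sup_le_sup (mono X Xs hXle A₁ B₁ i j) (mono X Xs hXle A₂ B₂ i j)
  · intro hFXs
    exact ⟨Xs, rmax, hFXs⟩
  · intro X hX hFX i j
    exact (key X).1 (fun i j => le_of_eq (congrFun (congrFun hFX i) j)) i j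
end

section
/- The general max-plus Sylvester equation ⊕_{k=1}^p A_k ⊗ X ⊗ B_k = C is solvable if and only if X* = ⊕'_{k=1}^p A_k♯ ⊗' C ⊗' B_k♯ is a solution, and in that case X* is the maximum solution in the entrywise order. -/
set_option linter.unnecessarySeqFocus false
set_option linter.unreachableTactic false
set_option linter.unusedTactic false

theorem er1 (a x z : EReal) (h : a + x ≤ z) : x ≤ -(a + (-z)) := by
  induction a using EReal.rec <;> induction z using EReal.rec <;> induction x using EReal.rec <;>
    norm_cast at h ⊢ <;> simp_all <;> first | linarith | exact (EReal.coe_ne_top _ h).elim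

theorem er2 (a x z : EReal) (ha : a ≠ ⊤) (h : x ≤ -(a + (-z))) : a + x ≤ z := by
  induction a using EReal.rec <;> induction z using EReal.rec <;> induction x using EReal.rec <;>
    norm_cast at h ⊢ <;> simp_all <;> first | linarith | exact (EReal.coe_ne_top _ h).elim

theorem er1r (b x z : EReal) (h : x + b ≤ z) : x ≤ -((-z) + b) := by
  rw [add_comm (-z) b]; exact er1 b x z (by rwa [add_comm] at h)

theorem er2r (b x z : EReal) (hb : b ≠ ⊤) (h : x ≤ -((-z) + b)) : x + b ≤ z := by
  rw [add_comm]; exact er2 b x z hb (by rwa [add_comm (-z) b] at h)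

theorem mpAdd_neg_left (a z : EReal) : mpAdd (-a) z = -(a + (-z)) := by
  rw [mpAdd, neg_neg]

theorem mpAdd_neg_right (z b : EReal) : mpAdd z (-b) = -((-z) + b) := by
  rw [mpAdd, neg_neg]

theorem mpAdd_mono_right (a : EReal) {b b' : EReal} (h : b ≤ b') :
    mpAdd a b ≤ mpAdd a b' := by
  rw [mpAdd, mpAdd]
  exact EReal.neg_le_neg_iff.mpr (add_le_add_right (EReal.neg_le_neg_iff.mpr h) _)

/-- Any solution is dominated entrywise by the candidate `X*`. -/
theorem sol_le_star {m n p : ℕ} (A : Fin p → Matrix (Fin m) (Fin m) EReal)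
    (B : Fin p → Matrix (Fin n) (Fin n) EReal) (C : Matrix (Fin m) (Fin n) EReal)
    (X : Matrix (Fin m) (Fin n) EReal)
    (h : (fun i j => ⨆ k, maxMul (A k) (maxMul X (B k)) i j) = C) :
    ∀ i j, X i j ≤ ⨅ k, minMul (conj (A k)) (minMul C (conj (B k))) i j := by
  intro i j
  refine le_iInf fun k => ?_
  simp only [minMul, conj]
  refine le_iInf fun s => ?_
  rw [mpAdd_neg_left]
  apply er1
  refine le_iInf fun t => ?_
  rw [mpAdd_neg_right]
  apply er1r
  rw [add_assoc]
  have hst : (⨆ k', maxMul (A k') (maxMul X (B k')) s t) = C s t :=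
    congrFun (congrFun h s) t
  calc A k s i + (X i j + B k j t)
      ≤ maxMul (A k) (maxMul X (B k)) s t := by
        simp only [maxMul]
        refine le_trans ?_ (le_iSup (fun i' => A k s i' + ⨆ j', X i' j' + B k j' t) i)
        exact add_le_add_right (le_iSup (fun j' => X i j' + B k j' t) j) _
    _ ≤ ⨆ k', maxMul (A k') (maxMul X (B k')) s t := le_iSup (fun k' => maxMul (A k') (maxMul X (B k')) s t) k
    _ = C s t := hst

/-- The candidate `X*` always gives a subsolution. -/
theorem star_ub {m n p : ℕ} (A : Fin p → Matrix (Fin m) (Fin m) EReal)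
    (B : Fin p → Matrix (Fin n) (Fin n) EReal) (C : Matrix (Fin m) (Fin n) EReal)
    (hA : ∀ k, DoublyRAstic (A k)) (hB : ∀ k, DoublyRAstic (B k)) :
    ∀ s t, (⨆ k, maxMul (A k) (maxMul
        (fun i' j' => ⨅ k', minMul (conj (A k')) (minMul C (conj (B k'))) i' j')
        (B k)) s t) ≤ C s t := by
  intro s t
  refine iSup_le fun k => ?_
  simp only [maxMul]
  refine iSup_le fun i => ?_
  apply er2 _ _ _ ((hA k).1 s i)
  refine iSup_le fun j => ?_
  have h1 : (⨅ k', minMul (conj (A k')) (minMul C (conj (B k'))) i j)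
      ≤ mpAdd (-(A k s i)) (mpAdd (C s t) (-(B k j t))) := by
    refine (iInf_le _ k).trans ?_
    simp only [minMul, conj]
    refine (iInf_le _ s).trans ?_
    exact mpAdd_mono_right _ (iInf_le _ t)
  rw [mpAdd_neg_left] at h1
  have h2 := er2 _ _ _ ((hA k).1 s i) h1
  rw [mpAdd_neg_right] at h2
  have h3 := er2r _ _ _ ((hB k).1 j t) h2
  rw [add_assoc] at h3
  exact er1 _ _ _ h3
theorem stmt11 {m n p : ℕ} (A : Fin p → Matrix (Fin m) (Fin m) EReal)
    (B : Fin p → Matrix (Fin n) (Fin n) EReal) (C : Matrix (Fin m) (Fin n) EReal)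
    (hA : ∀ k, DoublyRAstic (A k)) (hB : ∀ k, DoublyRAstic (B k)) (hC : FiniteEntries C) :
    ((∃ X : Matrix (Fin m) (Fin n) EReal, RMaxEntries X ∧
        (fun i j => ⨆ k, maxMul (A k) (maxMul X (B k)) i j) = C) ↔
      (fun i j => ⨆ k, maxMul (A k) (maxMul
          (fun i' j' => ⨅ k', minMul (conj (A k')) (minMul C (conj (B k'))) i' j')
          (B k)) i j) = C) ∧
    (∀ X : Matrix (Fin m) (Fin n) EReal, RMaxEntries X →
      (fun i j => ⨆ k, maxMul (A k) (maxMul X (B k)) i j) = C →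
      ∀ i j, X i j ≤ ⨅ k, minMul (conj (A k)) (minMul C (conj (B k))) i j) := by

  have star_le := star_ub A B C hA hB
  constructor
  · constructor
    · rintro ⟨X, hX, hFX⟩
      have hle := sol_le_star A B C X hFX
      funext s t
      refine le_antisymm (star_le s t) ?_
      have hst : (⨆ k, maxMul (A k) (maxMul X (B k)) s t) = C s t :=
        congrFun (congrFun hFX s) t
      rw [← hst]
      refine iSup_mono fun k => ?_
      simp only [maxMul]
      refine iSup_mono fun i => add_le_add_right (iSup_mono fun j => ?_) _
      exact add_le_add_left (hle i j) _
    · intro h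
      refine ⟨_, ?_, h⟩
      intro i j
      show (⨅ k', minMul (conj (A k')) (minMul C (conj (B k'))) i j) ≠ ⊤
      have hp : Nonempty (Fin p) := by
        by_contra hne
        have := not_nonempty_iff.mp hne
        have h0 := congrFun (congrFun h i) j
        rw [iSup_of_empty] at h0
        obtain ⟨r, hr⟩ := hC i j
        rw [hr] at h0
        simp at h0
      obtain ⟨k⟩ := hp
      obtain ⟨s, hs⟩ := (hA k).2.2 i
      obtain ⟨t, ht⟩ := (hB k).2.1 j
      have h1 : (⨅ k', minMul (conj (A k')) (minMul C (conj (B k'))) i j)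
          ≤ mpAdd (-(A k s i)) (mpAdd (C s t) (-(B k j t))) := by
        refine (iInf_le _ k).trans ?_
        simp only [minMul, conj]
        refine (iInf_le _ s).trans ?_
        exact mpAdd_mono_right _ (iInf_le _ t)
      rw [mpAdd_neg_left, mpAdd_neg_right, neg_neg] at h1
      intro htop
      rw [htop, top_le_iff] at h1
      have hbot : A k s i + (-(C s t) + B k j t) = ⊥ := by
        rw [← neg_neg (A k s i + (-(C s t) + B k j t)), h1]
        simp
      rcases EReal.add_eq_bot_iff.mp hbot with h' | h'
      · exact hs h'
      · rcases EReal.add_eq_bot_iff.mp h' with h'' | h''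
        · obtain ⟨r, hr⟩ := hC s t
          rw [hr] at h''
          simp at h''
        · exact ht h''
  · exact fun X _ hFX i j => sol_le_star A B C X hFX i j
end

section
/- For any X satisfying ⊕_{k=1}^p A_k ⊗ X ⊗ B_k ≤ C, we have X ≤ ⊕'_{k=1}^p A_k♯ ⊗' C ⊗' B_k♯; i.e., the candidate principal solution is an entrywise upper bound for all subsolutions of the Sylvester inequality. -/
lemma ereal_add_iSup_le {ι : Sort*} (a c : EReal) (f : ι → EReal)
    (h : ∀ i, a + f i ≤ c) : a + ⨆ i, f i ≤ c := by
  induction a using EReal.rec with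
  | bot => simp
  | top =>
    by_cases hs : (⨆ i, f i) = ⊥
    · simp [hs]
    · have : ∃ i, f i ≠ ⊥ := by
        by_contra hc
        push_neg at hc
        exact hs (by simp [hc])
      obtain ⟨i, hi⟩ := this
      have := h i
      rw [EReal.top_add_of_ne_bot hi] at this
      exact le_top.trans this
  | coe a =>
    rw [add_comm, ← EReal.le_sub_iff_add_le (Or.inl (EReal.coe_ne_bot a)) (Or.inl (EReal.coe_ne_top a))]
    exact iSup_le fun i => (EReal.le_sub_iff_add_le (Or.inl (EReal.coe_ne_bot a)) (Or.inl (EReal.coe_ne_top a))).mpr (by rw [add_comm]; exact h i)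

lemma ereal_neg_iInf {ι : Sort*} (f : ι → EReal) : -(⨅ i, f i) = ⨆ i, -(f i) := by
  apply le_antisymm
  · rw [EReal.neg_le]
    exact le_iInf fun i => EReal.neg_le.mp (le_iSup (fun i => -(f i)) i)
  · exact iSup_le fun i => EReal.neg_le_neg_iff.mpr (iInf_le _ i)

lemma key (a0 b0 x : EReal) (r : ℝ) (hx : x ≠ ⊤)
    (h : a0 + (x + b0) ≤ (r : EReal)) : a0 + ((-(r:EReal)) + b0) ≤ -x := by
  induction x using EReal.rec with
  | bot => simp
  | top => exact absurd rfl hx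
  | coe x =>
    induction a0 using EReal.rec with
    | bot => simp
    | top =>
      induction b0 using EReal.rec with
      | bot => simp
      | top => simp [EReal.top_add_of_ne_bot] at h
      | coe b => rw [show ((x:EReal)+(b:EReal)) = ((x+b:ℝ):EReal) by push_cast; ring, EReal.top_add_coe] at h; exact absurd h (by simp)
    | coe a =>
      induction b0 using EReal.rec with
      | bot => simp
      | top =>
        rw [EReal.add_top_of_ne_bot (by simp : (x:EReal) ≠ ⊥), EReal.add_top_of_ne_bot (by simp : (a:EReal) ≠ ⊥)] at h
        exact absurd h (by simp)
      | coe b =>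
        have h' : ((a + (x + b) : ℝ) : EReal) ≤ (r : EReal) := by push_cast; exact h
        rw [EReal.coe_le_coe_iff] at h'
        have : ((a + (-r + b) : ℝ) : EReal) ≤ ((-x : ℝ) : EReal) := by
          rw [EReal.coe_le_coe_iff]; linarith
        calc (a : EReal) + ((-(r:EReal)) + (b:EReal)) = ((a + (-r + b) : ℝ) : EReal) := by push_cast; ring
          _ ≤ _ := by rw [← EReal.coe_neg]; exact this


theorem stmt12 {m n p : ℕ} (A : Fin p → Matrix (Fin m) (Fin m) EReal)
    (B : Fin p → Matrix (Fin n) (Fin n) EReal) (C X : Matrix (Fin m) (Fin n) EReal)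
    (hC : FiniteEntries C) (hX : RMaxEntries X)
    (h : ∀ i j, (⨆ k, maxMul (A k) (maxMul X (B k)) i j) ≤ C i j) :
    ∀ i j, X i j ≤ ⨅ k, minMul (conj (A k)) (minMul C (conj (B k))) i j := by
  intro i j
  refine le_iInf fun k => ?_
  show X i j ≤ ⨅ a, mpAdd (conj (A k) i a) (minMul C (conj (B k)) a j)
  refine le_iInf fun a => ?_
  have hy : -(minMul C (conj (B k)) a j) = ⨆ b, ((-(C a b)) + (B k j b)) := by
    unfold minMul mpAdd conj
    rw [ereal_neg_iInf]
    simp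
  show X i j ≤ -((-(conj (A k) i a)) + (-(minMul C (conj (B k)) a j)))
  rw [hy]
  unfold conj
  rw [neg_neg]
  refine EReal.le_neg_of_le_neg ?_
  refine ereal_add_iSup_le _ _ _ fun b => ?_
  obtain ⟨r, hr⟩ := hC a b
  rw [hr]
  refine key _ _ _ _ (hX i j) ?_
  rw [← hr]
  refine le_trans ?_ (h a b)
  refine le_trans ?_ (le_iSup _ k)
  show A k a i + (X i j + B k j b) ≤ ⨆ i', A k a i' + maxMul X (B k) i' b
  refine le_trans ?_ (le_iSup _ i)
  refine add_le_add (le_refl _) ?_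
  exact le_iSup (fun j' => X i j' + B k j' b) j
end

section
/- The equation A ⊗ X ⊕ X ⊗ B = C (with A m×m, B n×n, C m×n over max-plus algebra) is solvable if and only if X* = (A♯ ⊗' C) ⊕' (C ⊗' B♯) is a solution, in which case X* is the maximum solution. -/
private lemma l3 (a : EReal) (h1 : a ≠ ⊥) (h2 : a ≠ ⊤) : ∃ r : ℝ, a = (r:EReal) := by
  induction a using EReal.rec with
  | bot => exact absurd rfl h1
  | coe r => exact ⟨r, rfl⟩
  | top => exact absurd rfl h2

private lemma l1 (a : EReal) (c : ℝ) (ha : a ≠ ⊤) : a + -(a + -(c:EReal)) ≤ (c:EReal) := by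
  induction a using EReal.rec with
  | bot => simp
  | coe r =>
      rw [show ((r:EReal) + -(c:EReal)) = ((r - c:ℝ):EReal) by
        rw [← EReal.coe_neg, ← EReal.coe_add]; ring_nf,
        ← EReal.coe_neg, ← EReal.coe_add]
      norm_num
  | top => exact absurd rfl ha

private lemma l2 (a x : EReal) (c : ℝ) (ha : a ≠ ⊤) (hx : x ≠ ⊤) (h : a + x ≤ (c:EReal)) :
    x ≤ -(a + -(c:EReal)) := by
  induction a using EReal.rec with
  | bot => simp
  | coe r =>
      induction x using EReal.rec with
      | bot => simp
      | coe s =>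
          rw [show ((r:EReal) + -(c:EReal)) = ((r - c:ℝ):EReal) by
            rw [← EReal.coe_neg, ← EReal.coe_add]; ring_nf, ← EReal.coe_neg]
          rw [← EReal.coe_add, EReal.coe_le_coe_iff] at h
          rw [EReal.coe_le_coe_iff]; linarith
      | top => exact absurd rfl hx
  | top => exact absurd rfl ha

theorem stmt13 {m n : ℕ} (A : Matrix (Fin m) (Fin m) EReal) (B : Matrix (Fin n) (Fin n) EReal)
    (C : Matrix (Fin m) (Fin n) EReal)
    (hA : DoublyRAstic A) (hB : DoublyRAstic B) (hC : FiniteEntries C) :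
    ((∃ X : Matrix (Fin m) (Fin n) EReal, RMaxEntries X ∧
        (fun i j => maxMul A X i j ⊔ maxMul X B i j) = C) ↔
      (fun i j =>
          maxMul A (fun i' j' => minMul (conj A) C i' j' ⊓ minMul C (conj B) i' j') i j ⊔
          maxMul (fun i' j' => minMul (conj A) C i' j' ⊓ minMul C (conj B) i' j') B i j) = C) ∧
    (∀ X : Matrix (Fin m) (Fin n) EReal, RMaxEntries X →
      (fun i j => maxMul A X i j ⊔ maxMul X B i j) = C →
      ∀ i j, X i j ≤ minMul (conj A) C i j ⊓ minMul C (conj B) i j) := by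
  set Xs : Matrix (Fin m) (Fin n) EReal :=
    fun i' j' => minMul (conj A) C i' j' ⊓ minMul C (conj B) i' j' with hXs
  -- maximality
  have hmax : ∀ X : Matrix (Fin m) (Fin n) EReal, RMaxEntries X →
      (fun i j => maxMul A X i j ⊔ maxMul X B i j) = C →
      ∀ i j, X i j ≤ minMul (conj A) C i j ⊓ minMul C (conj B) i j := by
    intro X hX hEq i j
    have hAle : ∀ k l, maxMul A X k l ≤ C k l := by
      intro k l; rw [← congrFun (congrFun hEq k) l]; exact le_sup_left
    have hBle : ∀ k l, maxMul X B k l ≤ C k l := by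
      intro k l; rw [← congrFun (congrFun hEq k) l]; exact le_sup_right
    refine le_inf ?_ ?_
    · refine le_iInf fun k => ?_
      obtain ⟨c, hc⟩ := hC k j
      have h1 : A k i + X i j ≤ (c:EReal) := by
        rw [← hc]
        exact le_trans (le_iSup (fun l => A k l + X l j) i) (hAle k j)
      show X i j ≤ mpAdd (conj A i k) (C k j)
      rw [hc]; simp only [mpAdd, conj, neg_neg]
      exact l2 _ _ _ (hA.1 k i) (hX i j) h1
    · refine le_iInf fun k => ?_
      obtain ⟨c, hc⟩ := hC i k
      have h1 : B j k + X i j ≤ (c:EReal) := by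
        rw [← hc, add_comm]
        exact le_trans (le_iSup (fun l => X i l + B l k) j) (hBle i k)
      show X i j ≤ mpAdd (C i k) (conj B k j)
      rw [hc]; simp only [mpAdd, conj, neg_neg]
      rw [add_comm (-(c:EReal))]
      exact l2 _ _ _ (hB.1 j k) (hX i j) h1
  -- upper bounds on the candidate
  have hub1 : ∀ i j, maxMul A Xs i j ≤ C i j := by
    intro i j
    obtain ⟨c, hc⟩ := hC i j
    rw [hc]
    refine iSup_le fun k => ?_
    have h1 : Xs k j ≤ mpAdd (conj A k i) (C i j) :=
      le_trans inf_le_left (iInf_le (fun l => mpAdd (conj A k l) (C l j)) i)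
    refine le_trans (add_le_add_right h1 (A i k)) ?_
    rw [hc]; simp only [mpAdd, conj, neg_neg]
    exact l1 _ _ (hA.1 i k)
  have hub2 : ∀ i j, maxMul Xs B i j ≤ C i j := by
    intro i j
    obtain ⟨c, hc⟩ := hC i j
    rw [hc]
    refine iSup_le fun k => ?_
    have h1 : Xs i k ≤ mpAdd (C i j) (conj B j k) :=
      le_trans inf_le_right (iInf_le (fun l => mpAdd (C i l) (conj B l k)) j)
    refine le_trans (add_le_add_left h1 (B k j)) ?_
    rw [hc]; simp only [mpAdd, conj, neg_neg]
    rw [add_comm (-(c:EReal)), add_comm _ (B k j)]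
    exact l1 _ _ (hB.1 k j)
  -- the candidate has no ⊤ entries
  have hXtop : RMaxEntries Xs := by
    intro i j
    obtain ⟨k, hk⟩ := hA.2.2 i
    have hk' : A k i ≠ ⊤ := hA.1 k i
    obtain ⟨r, hr⟩ := l3 (A k i) hk hk'
    obtain ⟨c, hc⟩ := hC k j
    have h1 : Xs i j ≤ mpAdd (conj A i k) (C k j) :=
      le_trans inf_le_left (iInf_le (fun l => mpAdd (conj A i l) (C l j)) k)
    have h2 : mpAdd (conj A i k) (C k j) = ((c - r : ℝ) : EReal) := by
      simp only [mpAdd, conj, neg_neg, hr, hc]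
      rw [← EReal.coe_neg, ← EReal.coe_add, ← EReal.coe_neg, EReal.coe_eq_coe_iff]
      ring
    rw [h2] at h1
    exact (h1.trans_lt (EReal.coe_lt_top _)).ne
  refine ⟨⟨?_, fun hEq => ⟨Xs, hXtop, hEq⟩⟩, hmax⟩
  rintro ⟨X, hX, hEq⟩
  have hle := hmax X hX hEq
  funext i j
  refine le_antisymm (sup_le (hub1 i j) (hub2 i j)) ?_
  rw [← congrFun (congrFun hEq i) j]
  exact sup_le_sup (iSup_mono fun k => add_le_add_right (hle k j) (A i k))
    (iSup_mono fun k => add_le_add_left (hle i k) (B k j))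
end
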